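/- Let a ∈ (0,2), let C > 0, λ > 0, T > 0 and α ∈ ℝ. Then the function x ↦ ((1−α)/2)·(−x²/2)³·C·exp(−λx²/2)·x^(−a−1) is integrable on (0,∞) and T·∫₀^∞ ((1−α)/2)·(−x²/2)³·C·exp(−λx²/2)·x^(−a−1) dx = −((1−α)/2)·2^{−1−a/2}·T·C·Γ(3−a/2)/λ^{3−a/2}. -/

import Mathlib

open MeasureTheory Real Set

/-- The nonvanishing α-connection component of the RDTS information geometry. -/
theorem rdts_alpha_connection_component (a C l T α : ℝ)
    (ha₀ : 0 < a) (ha₂ : a < 2) (hC : 0 < C) (hl : 0 < l) (hT : 0 < T) :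
    IntegrableOn
      (fun x : ℝ => ((1 - α) / 2) * (-(x ^ 2) / 2) ^ 3 * C * exp (-(l * x ^ 2 / 2))
        * x ^ (-a - 1)) (Ioi 0) ∧
    T * ∫ x in Ioi (0:ℝ),
        ((1 - α) / 2) * (-(x ^ 2) / 2) ^ 3 * C * exp (-(l * x ^ 2 / 2)) * x ^ (-a - 1)
      = -((1 - α) / 2) * (2:ℝ) ^ (-1 - a / 2) * T * C * Gamma (3 - a / 2) / l ^ (3 - a / 2) := by
  have hs : (-1:ℝ) < 5 - a := by linarith
  have hb : (0:ℝ) < l / 2 := by linarith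
  set K : ℝ := -((1 - α) / 2) * C / 8 with hK
  have hcong : EqOn
      (fun x : ℝ => ((1 - α) / 2) * (-(x ^ 2) / 2) ^ 3 * C * exp (-(l * x ^ 2 / 2))
        * x ^ (-a - 1))
      (fun x : ℝ => K * (x ^ (5 - a) * exp (-(l / 2) * x ^ (2:ℝ)))) (Ioi 0) := by
    intro x hx
    have hx0 : (0:ℝ) < x := hx
    have h6 : x ^ (5 - a) = x ^ (6:ℕ) * x ^ (-a - 1) := by
      rw [← rpow_natCast x 6, ← rpow_add hx0]; ring_nf
    have h2 : x ^ ((2:ℝ)) = x ^ (2:ℕ) := by rw [← rpow_natCast x 2]; norm_num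
    simp only [h6, h2, hK]
    have he : -(l / 2) * x ^ (2:ℕ) = -(l * x ^ 2 / 2) := by ring
    rw [he]
    ring
  have hint : IntegrableOn (fun x : ℝ => K * (x ^ (5 - a) * exp (-(l / 2) * x ^ (2:ℝ))))
      (Ioi 0) := by
    have h : IntegrableOn (fun x : ℝ => K * (x ^ (5 - a) * exp (-(l / 2) * x ^ (2:ℕ))))
        (Ioi 0) := (integrableOn_rpow_mul_exp_neg_mul_sq hb hs).const_mul K
    refine h.congr_fun (fun x hx => ?_) measurableSet_Ioi
    dsimp only
    rw [show x ^ ((2:ℕ)) = x ^ ((2:ℝ)) by rw [← rpow_natCast x 2]; norm_num]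
  refine ⟨(hint.congr_fun hcong.symm measurableSet_Ioi), ?_⟩
  rw [setIntegral_congr_fun measurableSet_Ioi hcong, integral_const_mul,
    integral_rpow_mul_exp_neg_mul_rpow two_pos hs hb]
  have h1 : (5 - a + 1) / 2 = 3 - a / 2 := by ring
  have h2 : -(5 - a + 1) / 2 = -(3 - a / 2) := by ring
  rw [h1, h2, rpow_neg hb.le, div_rpow hl.le (by norm_num : (0:ℝ) ≤ 2)]
  have hl3 : (0:ℝ) < l ^ (3 - a / 2) := rpow_pos_of_pos hl _
  have h2p : (0:ℝ) < (2:ℝ) ^ (3 - a / 2) := rpow_pos_of_pos two_pos _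
  have key : (2:ℝ) ^ ((3 * 2 - a) / 2) = 16 * (2:ℝ) ^ ((-2 - a) / 2) := by
    rw [show ((3 * 2 - a) / 2 : ℝ) = 4 + (-2 - a) / 2 by ring, rpow_add two_pos,
      show (4:ℝ) = ((4:ℕ):ℝ) by norm_num, rpow_natCast]
    norm_num
  field_simp
  rw [key]
  ring
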